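/- Fix integers d ≥ 3, n ≥ d, p ∈ [0,1], and deterministic sets T ⊆ S ⊆ [n] with |T| = k₀ ≥ 1 and |S| = k. Let P_S and P_T denote the laws of the adjacency matrix A under the hypergraph planted clique model conditional on the planted set being S and T, respectively, and set M := A − E₀[A] and u_T := 1_T/√k₀. Then for every t ∈ ℝ: P_S(‖M‖ ≤ t) ≤ P_T(⟨u_T, M u_T⟩ ≤ t). -/

import Mathlib

open MeasureTheory Filter Finset Matrix
open scoped ENNReal

namespace HPC

/-- Hyperedges: `d`-element subsets of `[n]`. -/
abbrev Edge (n d : ℕ) : Type := {e : Finset (Fin n) // e.card = d}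

/-- A hyperedge configuration. -/
abbrev Config (n d : ℕ) : Type := Edge n d → Bool

instance {n : ℕ} : MeasurableSpace (Finset (Fin n)) := ⊤

/-- Bernoulli measure on `Bool` with success probability `p`. -/
noncomputable def bern (p : ℝ) : Measure Bool :=
  ENNReal.ofReal p • Measure.dirac true + ENNReal.ofReal (1 - p) • Measure.dirac false

/-- Law of the indicator of hyperedge `e` when the planted set is `S`:
hyperedges inside `S` are present surely, the others with probability `p`. -/
noncomputable def edgeLaw (n d : ℕ) (p : ℝ) (S : Finset (Fin n)) (e : Edge n d) :
    Measure Bool :=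
  if (e : Finset (Fin n)) ⊆ S then Measure.dirac true else bern p

/-- Conditional law of the configuration given the planted set `S`. -/
noncomputable def condLaw (n d : ℕ) (p : ℝ) (S : Finset (Fin n)) : Measure (Config n d) :=
  Measure.pi fun e => edgeLaw n d p S e

/-- Marginal law `P_k` of the configuration, the planted set being uniform of size `k`. -/
noncomputable def law (n d : ℕ) (p : ℝ) (k : ℕ) : Measure (Config n d) :=
  (((univ : Finset (Finset (Fin n))).filter fun S => S.card = k).card : ℝ≥0∞)⁻¹ •
    ∑ S ∈ (univ : Finset (Finset (Fin n))).filter fun S => S.card = k, condLaw n d p S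

/-- Joint law of the planted set (uniform of size `k`) and the configuration. -/
noncomputable def jointLaw (n d : ℕ) (p : ℝ) (k : ℕ) :
    Measure (Finset (Fin n) × Config n d) :=
  (((univ : Finset (Finset (Fin n))).filter fun S => S.card = k).card : ℝ≥0∞)⁻¹ •
    ∑ S ∈ (univ : Finset (Finset (Fin n))).filter fun S => S.card = k,
      Measure.map (fun H => (S, H)) (condLaw n d p S)

/-- Adjacency matrix (pairwise co-occurrence counts) of a configuration. -/
noncomputable def adj (n d : ℕ) (H : Config n d) : Matrix (Fin n) (Fin n) ℝ :=
  Matrix.of fun i j =>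
    if i = j then 0 else
      ∑ e : Edge n d,
        if i ∈ (e : Finset (Fin n)) ∧ j ∈ (e : Finset (Fin n)) ∧ H e = true then (1 : ℝ) else 0

/-- Null-model expectation `E₀[A]`. -/
noncomputable def expAdj (n d : ℕ) (p : ℝ) : Matrix (Fin n) (Fin n) ℝ :=
  Matrix.of fun i j => if i = j then 0 else ((n - 2).choose (d - 2) : ℝ) * p

/-- Centered adjacency matrix `M = A − E₀[A]`. -/
noncomputable def centered (n d : ℕ) (p : ℝ) (H : Config n d) : Matrix (Fin n) (Fin n) ℝ :=
  adj n d H - expAdj n d p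

/-- Spectral (ℓ²-operator) norm of a real square matrix. -/
noncomputable def specNorm {n : ℕ} (M : Matrix (Fin n) (Fin n) ℝ) : ℝ :=
  ‖LinearMap.toContinuousLinearMap (Matrix.toEuclideanLin M)‖

/-- Euclidean norm on `Fin n → ℝ`. -/
noncomputable def norm2 {n : ℕ} (v : Fin n → ℝ) : ℝ := Real.sqrt (∑ i, v i ^ 2)

/-- Supremum norm on `Fin n → ℝ`. -/
noncomputable def normInf {n : ℕ} (v : Fin n → ℝ) : ℝ := ‖v‖

/-- Two-to-infinity norm: maximal Euclidean row norm. -/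
noncomputable def norm2toInf {n : ℕ} (M : Matrix (Fin n) (Fin n) ℝ) : ℝ :=
  normInf fun i => norm2 (M i)

/-- `u` is a unit eigenvector of `M` for the eigenvalue `lam`, and `lam` is the
largest eigenvalue of `M`. -/
def IsTopEigenpair {n : ℕ} (M : Matrix (Fin n) (Fin n) ℝ) (lam : ℝ) (u : Fin n → ℝ) : Prop :=
  norm2 u = 1 ∧ M.mulVec u = lam • u ∧
    ∀ (mu : ℝ) (v : Fin n → ℝ), v ≠ 0 → M.mulVec v = mu • v → mu ≤ lam

/-- `T` is a set of indices of `k` largest entries of `|u|` (ties broken arbitrarily). -/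
def IsTopK {n : ℕ} (k : ℕ) (u : Fin n → ℝ) (T : Finset (Fin n)) : Prop :=
  T.card = k ∧ ∀ i ∈ T, ∀ j ∉ T, |u j| ≤ |u i|

/-- Normalized indicator vector `1_T / √|T|`. -/
noncomputable def uInd {n : ℕ} (T : Finset (Fin n)) : Fin n → ℝ :=
  fun i => if i ∈ T then (Real.sqrt T.card)⁻¹ else 0

/-- Normalized indicator vector `1_S / √k`. -/
noncomputable def uStar {n : ℕ} (k : ℕ) (S : Finset (Fin n)) : Fin n → ℝ :=
  fun i => if i ∈ S then (Real.sqrt k)⁻¹ else 0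

/-- `c_e(T) = |e ∩ T|·(|e ∩ T| − 1)`. -/
noncomputable def cE {n : ℕ} (e T : Finset (Fin n)) : ℝ :=
  ((e ∩ T).card : ℝ) * (((e ∩ T).card : ℝ) - 1)

/-- Co-membership matrix of a hyperedge. -/
noncomputable def coB {n : ℕ} (e : Finset (Fin n)) : Matrix (Fin n) (Fin n) ℝ :=
  Matrix.of fun i j => if i ≠ j ∧ i ∈ e ∧ j ∈ e then 1 else 0

/-- `λ* = (1 − p)(k − 1)·C(k−2, d−2)`. -/
noncomputable def lamStar (d k : ℕ) (p : ℝ) : ℝ :=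
  (1 - p) * ((k : ℝ) - 1) * ((k - 2).choose (d - 2) : ℝ)

noncomputable def wIn (n d k : ℕ) (p : ℝ) : ℝ :=
  ((k - 2).choose (d - 2) : ℝ) +
    p * (((n - 2).choose (d - 2) : ℝ) - ((k - 2).choose (d - 2) : ℝ))

noncomputable def wOut (n d : ℕ) (p : ℝ) : ℝ := p * ((n - 2).choose (d - 2) : ℝ)

/-- `M* = (w_in − w_out)·(1_S 1_Sᵀ − I_S)`, the conditional expectation `E_S[M]`. -/
noncomputable def mStarOf (n d k : ℕ) (p : ℝ) (S : Finset (Fin n)) :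
    Matrix (Fin n) (Fin n) ℝ :=
  Matrix.of fun i j =>
    (wIn n d k p - wOut n d p) *
      ((if i ∈ S then (1 : ℝ) else 0) * (if j ∈ S then 1 else 0) -
        if i = j ∧ i ∈ S then 1 else 0)

/-- Leave-one-out perturbation `B^{(m)} = Σ_{e ∋ m} (H_e − p)·B_e`. -/
noncomputable def bMat (n d : ℕ) (p : ℝ) (H : Config n d) (m : Fin n) :
    Matrix (Fin n) (Fin n) ℝ :=
  ∑ e : Edge n d,
    if m ∈ (e : Finset (Fin n)) then
      ((if H e then (1 : ℝ) else 0) - p) • coB (e : Finset (Fin n))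
    else 0

/-- `(lam, U)` is an orthonormal eigendecomposition of `A` with eigenvalues listed in
nonincreasing order. -/
def IsEigenDecomp {n : ℕ} (A : Matrix (Fin n) (Fin n) ℝ) (lam : Fin n → ℝ)
    (U : Fin n → Fin n → ℝ) : Prop :=
  (∀ i j, U i ⬝ᵥ U j = if i = j then (1 : ℝ) else 0) ∧
    (∀ i, A.mulVec (U i) = lam i • U i) ∧ Antitone lam

/-- Maximum of a real function over `Fin n`, `n > 0`. -/
noncomputable def maxOver {n : ℕ} (hn : 0 < n) (f : Fin n → ℝ) : ℝ :=
  (univ : Finset (Fin n)).sup' ⟨⟨0, hn⟩, Finset.mem_univ _⟩ f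

/-- `min_{i ≥ 2} |lam i − x|`, the minimum over non-leading indices. -/
noncomputable def minOffTop {n : ℕ} [NeZero n] (hn : 2 ≤ n) (lam : Fin n → ℝ) (x : ℝ) : ℝ :=
  ((univ : Finset (Fin n)).filter fun i => i ≠ 0).inf'
    ⟨⟨1, by omega⟩, by
      simp only [Finset.mem_filter, Finset.mem_univ, true_and, ne_eq]
      intro h
      simpa using congrArg Fin.val h⟩
    fun i => |lam i - x|

end HPC

open HPC MeasureTheory Filter Finset Matrix
open scoped ENNReal Topology

section Aux

variable {n d : ℕ}

/-- Every subset of a configuration space is measurable. -/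
lemma measSet_config (s : Set (Config n d)) : MeasurableSet s :=
  (Set.toFinite s).measurableSet

lemma meas_config {β : Type*} [MeasurableSpace β] (f : Config n d → β) : Measurable f :=
  fun _ _ => measSet_config _

lemma bern_prob {p : ℝ} (hp0 : 0 ≤ p) (hp1 : p ≤ 1) : IsProbabilityMeasure (bern p) := by
  constructor
  simp only [bern, Measure.coe_add, Measure.coe_smul, Pi.add_apply, Pi.smul_apply,
    Measure.dirac_apply' _ MeasurableSet.univ, Set.indicator_univ, Pi.one_apply, smul_eq_mul,
    mul_one]
  rw [← ENNReal.ofReal_add hp0 (by linarith)]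
  norm_num

lemma edgeLaw_prob {p : ℝ} (hp0 : 0 ≤ p) (hp1 : p ≤ 1) (S : Finset (Fin n)) (e : Edge n d) :
    IsProbabilityMeasure (edgeLaw n d p S e) := by
  unfold edgeLaw
  split
  · infer_instance
  · exact bern_prob hp0 hp1

lemma edge_measurePreserving {p : ℝ} (hp0 : 0 ≤ p) (hp1 : p ≤ 1)
    {T S : Finset (Fin n)} (hTS : T ⊆ S) (e : Edge n d) :
    MeasurePreserving (fun b => b || decide ((e : Finset (Fin n)) ⊆ S))
      (edgeLaw n d p T e) (edgeLaw n d p S e) := by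
  refine ⟨measurable_from_top, ?_⟩
  by_cases hS : (e : Finset (Fin n)) ⊆ S
  · have hfun : (fun b : Bool => b || decide ((e : Finset (Fin n)) ⊆ S)) = fun _ => true := by
      funext b; simp [hS]
    have hmass : edgeLaw n d p T e Set.univ = 1 :=
      (edgeLaw_prob hp0 hp1 T e).measure_univ
    rw [hfun, Measure.map_const, hmass, one_smul, edgeLaw, if_pos hS]
  · have hT' : ¬ (e : Finset (Fin n)) ⊆ T := fun h => hS (h.trans hTS)
    have hfun : (fun b : Bool => b || decide ((e : Finset (Fin n)) ⊆ S)) = fun b => b := by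
      funext b; simp [hS]
    rw [hfun, Measure.map_id']
    simp only [edgeLaw, if_neg hS, if_neg hT']

lemma condLaw_measurePreserving {p : ℝ} (hp0 : 0 ≤ p) (hp1 : p ≤ 1)
    {T S : Finset (Fin n)} (hTS : T ⊆ S) :
    MeasurePreserving (fun (H : Config n d) e => H e || decide ((e : Finset (Fin n)) ⊆ S))
      (condLaw n d p T) (condLaw n d p S) := by
  haveI : ∀ e : Edge n d, SigmaFinite (edgeLaw n d p S e) := fun e => by
    haveI := edgeLaw_prob hp0 hp1 S e; infer_instance
  exact measurePreserving_pi _ _ (fun e => edge_measurePreserving hp0 hp1 hTS e)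

lemma uInd_nonneg (T : Finset (Fin n)) (i : Fin n) : 0 ≤ uInd T i := by
  unfold uInd
  split
  · positivity
  · exact le_refl 0

lemma norm2_uInd (T : Finset (Fin n)) (hT : 1 ≤ T.card) : norm2 (uInd T) = 1 := by
  have hc : (0 : ℝ) < T.card := by exact_mod_cast hT
  unfold norm2 uInd
  have h : ∀ i : Fin n,
      (if i ∈ T then (Real.sqrt T.card)⁻¹ else 0) ^ 2
        = if i ∈ T then ((T.card : ℝ))⁻¹ else 0 := by
    intro i
    split
    · rw [inv_pow, Real.sq_sqrt hc.le]
    · ring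
  rw [Finset.sum_congr rfl (fun i _ => h i)]
  rw [Finset.sum_ite_mem, Finset.univ_inter, Finset.sum_const, nsmul_eq_mul,
    mul_inv_cancel₀ hc.ne']
  exact Real.sqrt_one

/-- Quadratic form against a unit vector is at most the spectral norm. -/
lemma quad_le_specNorm {m : ℕ} (M : Matrix (Fin m) (Fin m) ℝ) (u : Fin m → ℝ)
    (hu : norm2 u = 1) : u ⬝ᵥ M.mulVec u ≤ specNorm M := by
  set L := LinearMap.toContinuousLinearMap (Matrix.toEuclideanLin M) with hL
  set u' : EuclideanSpace ℝ (Fin m) := (WithLp.equiv 2 (Fin m → ℝ)).symm u with hu'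
  have hnorm : ‖u'‖ = 1 := by
    rw [EuclideanSpace.norm_eq]
    simpa [norm2, hu', WithLp.equiv_symm_apply, PiLp.toLp_apply, Real.norm_eq_abs, sq_abs] using hu
  have h1 : u ⬝ᵥ M.mulVec u = inner ℝ u' (L u') := by
    simp [hL, hu', PiLp.inner_apply, RCLike.inner_apply, dotProduct,
      LinearMap.coe_toContinuousLinearMap', Matrix.toEuclideanLin_toLp,
      WithLp.equiv_symm_apply, PiLp.toLp_apply, mul_comm]
  calc u ⬝ᵥ M.mulVec u = inner ℝ u' (L u') := h1
    _ ≤ ‖u'‖ * ‖L u'‖ := real_inner_le_norm _ _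
    _ ≤ ‖u'‖ * (‖L‖ * ‖u'‖) := by
        apply mul_le_mul_of_nonneg_left (L.le_opNorm u') (norm_nonneg _)
    _ = specNorm M := by rw [hnorm, specNorm]; ring

/-- The quadratic form of the centered adjacency matrix against a nonnegative vector is
monotone in the configuration. -/
lemma quad_mono {p : ℝ} (u : Fin n → ℝ) (hu : ∀ i, 0 ≤ u i) (H H' : Config n d)
    (hHH' : ∀ e, H e = true → H' e = true) :
    u ⬝ᵥ (centered n d p H).mulVec u ≤ u ⬝ᵥ (centered n d p H').mulVec u := by
  unfold centered
  rw [Matrix.sub_mulVec, Matrix.sub_mulVec, dotProduct_sub, dotProduct_sub]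
  apply sub_le_sub_right
  unfold dotProduct Matrix.mulVec dotProduct
  apply Finset.sum_le_sum
  intro i _
  apply mul_le_mul_of_nonneg_left _ (hu i)
  apply Finset.sum_le_sum
  intro j _
  apply mul_le_mul_of_nonneg_right _ (hu j)
  unfold adj
  simp only [Matrix.of_apply]
  split
  · exact le_refl 0
  · apply Finset.sum_le_sum
    intro e _
    by_cases hc : i ∈ (e : Finset (Fin n)) ∧ j ∈ (e : Finset (Fin n)) ∧ H e = true
    · rw [if_pos hc, if_pos ⟨hc.1, hc.2.1, hHH' e hc.2.2⟩]
    · rw [if_neg hc]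
      split <;> norm_num

end Aux

/-- **Coupling lemma.** For planted sets `T ⊆ S`,
`P_S(‖M‖ ≤ t) ≤ P_T(⟨u_T, M u_T⟩ ≤ t)` for every `t`. -/
theorem coupling_lemma (n d : ℕ) (hd : 3 ≤ d) (hn : d ≤ n)
    (p : ℝ) (hp : p ∈ Set.Icc (0 : ℝ) 1)
    (T S : Finset (Fin n)) (hTS : T ⊆ S)
    (k₀ k : ℕ) (hT : T.card = k₀) (hk₀ : 1 ≤ k₀) (hS : S.card = k)
    (t : ℝ) :
    condLaw n d p S {H | specNorm (centered n d p H) ≤ t}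
      ≤ condLaw n d p T
          {H | uInd T ⬝ᵥ (centered n d p H).mulVec (uInd T) ≤ t} := by
  obtain ⟨hp0, hp1⟩ := hp
  set F : Config n d → Config n d :=
    fun H e => H e || decide ((e : Finset (Fin n)) ⊆ S) with hF
  have hmp : MeasurePreserving F (condLaw n d p T) (condLaw n d p S) :=
    condLaw_measurePreserving hp0 hp1 hTS
  have hmap : condLaw n d p S {H | specNorm (centered n d p H) ≤ t}
      = condLaw n d p T (F ⁻¹' {H | specNorm (centered n d p H) ≤ t}) := by
    rw [← hmp.map_eq, Measure.map_apply (meas_config F) (measSet_config _)]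
  rw [hmap]
  apply measure_mono
  intro H hH
  simp only [Set.mem_preimage, Set.mem_setOf_eq] at hH ⊢
  have h1 : uInd T ⬝ᵥ (centered n d p H).mulVec (uInd T)
      ≤ uInd T ⬝ᵥ (centered n d p (F H)).mulVec (uInd T) := by
    apply quad_mono (uInd T) (uInd_nonneg T) H (F H)
    intro e he
    simp [hF, he]
  have h2 : uInd T ⬝ᵥ (centered n d p (F H)).mulVec (uInd T)
      ≤ specNorm (centered n d p (F H)) :=
    quad_le_specNorm _ _ (norm2_uInd T (hT ▸ hk₀))
  exact le_trans h1 (le_trans h2 hH)
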